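/- Let f : ℝ → ℝ be twice differentiable and M ≥ 0. If |f(t)| ≤ M for all t ∈ ℝ and f''(t) ≤ f(t) for all t ∈ ℝ, then |f'(t)| ≤ 2M for all t ∈ ℝ. -/

import Mathlib

/-- C¹ bound: a twice differentiable function on `ℝ` with `|f| ≤ M` and
`f'' ≤ f` satisfies `|f'| ≤ 2M`. -/
theorem stmt_7 (f f' f'' : ℝ → ℝ) (M : ℝ) (hM : 0 ≤ M)
    (hf : ∀ t : ℝ, HasDerivAt f (f' t) t)
    (hf' : ∀ t : ℝ, HasDerivAt f' (f'' t) t)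
    (hbound : ∀ t : ℝ, |f t| ≤ M)
    (hineq : ∀ t : ℝ, f'' t ≤ f t) :
    ∀ t : ℝ, |f' t| ≤ 2 * M := by
  -- `f' t - M*t` is antitone since its derivative `f'' t - M ≤ 0`.
  have hgder : ∀ t : ℝ, HasDerivAt (fun t => f' t - M * t) (f'' t - M) t := by
    intro t
    exact ((hf' t).sub ((hasDerivAt_id t).const_mul M)).congr_deriv (by ring)
  have hg : ∀ s t : ℝ, s ≤ t → f' t - M * t ≤ f' s - M * s := by
    have hA : Antitone (fun t => f' t - M * t) := by
      apply antitone_of_deriv_nonpos (fun t => (hgder t).differentiableAt)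
      intro t
      rw [(hgder t).deriv]
      have h1 := hineq t
      have h2 := (abs_le.mp (hbound t)).2
      linarith
    exact fun s t h => hA h
  intro t₀
  set c := f' t₀ with hc
  -- auxiliary function F
  have hFder : ∀ t : ℝ, HasDerivAt
      (fun t => f t - c * (t - t₀) - M / 2 * (t - t₀) ^ 2)
      (f' t - c - M * (t - t₀)) t := by
    intro t
    have h1 : HasDerivAt (fun t : ℝ => t - t₀) 1 t := by
      simpa using (hasDerivAt_id t).sub_const t₀
    have h2 : HasDerivAt (fun t : ℝ => c * (t - t₀)) c t := by
      simpa using h1.const_mul c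
    have h3 : HasDerivAt (fun t : ℝ => M / 2 * (t - t₀) ^ 2) (M * (t - t₀)) t := by
      have := (h1.pow 2).const_mul (M / 2)
      exact this.congr_deriv (by norm_num; ring)
    exact ((hf t).sub h2).sub h3
  rw [abs_le]
  constructor
  · -- lower bound: F antitone on Ici t₀
    have hmono : AntitoneOn (fun t => f t - c * (t - t₀) - M / 2 * (t - t₀) ^ 2)
        (Set.Ici t₀) := by
      apply antitoneOn_of_deriv_nonpos (convex_Ici t₀)
        (fun t _ => (hFder t).differentiableAt.continuousAt.continuousWithinAt)
        (fun t _ => (hFder t).differentiableAt.differentiableWithinAt)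
      intro t ht
      rw [(hFder t).deriv]
      rw [interior_Ici] at ht
      have := hg t₀ t (le_of_lt ht)
      simp only [hc] at *
      linarith
    have hle : t₀ ∈ Set.Ici t₀ := Set.self_mem_Ici
    have h2 : t₀ + 2 ∈ Set.Ici t₀ := by simp
    have := hmono hle h2 (by linarith)
    have hb1 := (abs_le.mp (hbound t₀)).1
    have hb2 := (abs_le.mp (hbound (t₀ + 2))).1
    have hb2' := (abs_le.mp (hbound (t₀ + 2))).2
    simp only at this
    have e : t₀ + 2 - t₀ = 2 := by ring
    rw [e] at this
    nlinarith [(abs_le.mp (hbound t₀)).2]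
  · -- upper bound: F monotone on Iic t₀
    have hmono : MonotoneOn (fun t => f t - c * (t - t₀) - M / 2 * (t - t₀) ^ 2)
        (Set.Iic t₀) := by
      apply monotoneOn_of_deriv_nonneg (convex_Iic t₀)
        (fun t _ => (hFder t).differentiableAt.continuousAt.continuousWithinAt)
        (fun t _ => (hFder t).differentiableAt.differentiableWithinAt)
      intro t ht
      rw [(hFder t).deriv]
      rw [interior_Iic] at ht
      have := hg t t₀ (le_of_lt ht)
      simp only [hc] at *
      linarith
    have hle : t₀ ∈ Set.Iic t₀ := Set.self_mem_Iic
    have h2 : t₀ - 2 ∈ Set.Iic t₀ := by simp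
    have := hmono h2 hle (by linarith)
    simp only at this
    have e : t₀ - 2 - t₀ = -2 := by ring
    rw [e] at this
    nlinarith [(abs_le.mp (hbound (t₀ - 2))).1, (abs_le.mp (hbound t₀)).2]
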